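/- Let α ∈ ℝ, ℓ > 0, n a positive integer, and k₀ = nπ/ℓ. Let ℓ₁, ℓ₂ : ℝ → ℝ be differentiable with ℓ₁(0) = ℓ₂(0) = ℓ, and let k : ℝ → ℂ be differentiable with k(0) = k₀, such that F(k(t), t) = 0 for all t in a neighborhood of 0, where F(κ, t) := (α − 3iκ)² − (α − iκ)²·(e^{2iκℓ₁(t)} + e^{2iκℓ₂(t)}) + 8κ²·e^{iκ(ℓ₁(t)+ℓ₂(t))} + (α + iκ)²·e^{2iκ(ℓ₁(t)+ℓ₂(t))}. Then k′(0) = −(ℓ₁′(0) + ℓ₂′(0))·k₀/(2ℓ). -/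

import Mathlib

open Complex Real

/-- For the loop graph with two leads and `δ`-couplings of the same strength `α`, if the
resonance pole `k(t)` satisfies the resonance condition `F(k(t), t) = 0` near `t = 0`
with `ℓ₁(0) = ℓ₂(0) = ℓ` and `k(0) = k₀ = nπ/ℓ`, then
`k'(0) = -(ℓ₁'(0) + ℓ₂'(0)) k₀ / (2ℓ)`. -/
theorem stmt_12 (α : ℝ) (ℓ : ℝ) (hℓ : 0 < ℓ) (n : ℕ) (hn : 0 < n)
    (ℓ₁ ℓ₂ : ℝ → ℝ) (hℓ₁ : Differentiable ℝ ℓ₁) (hℓ₂ : Differentiable ℝ ℓ₂)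
    (hℓ₁0 : ℓ₁ 0 = ℓ) (hℓ₂0 : ℓ₂ 0 = ℓ)
    (k : ℝ → ℂ) (hk : Differentiable ℝ k) (hk0 : k 0 = (n * Real.pi / ℓ : ℝ))
    (hF : ∀ᶠ t in nhds (0 : ℝ),
      ((α : ℂ) - 3 * Complex.I * k t) ^ 2
        - ((α : ℂ) - Complex.I * k t) ^ 2
          * (Complex.exp (2 * Complex.I * k t * (ℓ₁ t))
            + Complex.exp (2 * Complex.I * k t * (ℓ₂ t)))
        + 8 * (k t) ^ 2 * Complex.exp (Complex.I * k t * ((ℓ₁ t : ℂ) + (ℓ₂ t : ℂ)))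
        + ((α : ℂ) + Complex.I * k t) ^ 2
          * Complex.exp (2 * Complex.I * k t * ((ℓ₁ t : ℂ) + (ℓ₂ t : ℂ))) = 0) :
    deriv k 0 = -(((deriv ℓ₁ 0 + deriv ℓ₂ 0) * (n * Real.pi / ℓ) / (2 * ℓ) : ℝ) : ℂ) := by
  have hℓ0 : (ℓ : ℂ) ≠ 0 := Complex.ofReal_ne_zero.mpr hℓ.ne'
  have hk' : HasDerivAt k (deriv k 0) 0 := (hk 0).hasDerivAt
  have h1 : HasDerivAt (fun t => ((ℓ₁ t : ℝ) : ℂ)) ((deriv ℓ₁ 0 : ℝ) : ℂ) 0 :=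
    ((hℓ₁ 0).hasDerivAt).ofReal_comp
  have h2 : HasDerivAt (fun t => ((ℓ₂ t : ℝ) : ℂ)) ((deriv ℓ₂ 0 : ℝ) : ℂ) 0 :=
    ((hℓ₂ 0).hasDerivAt).ofReal_comp
  have hA := (hasDerivAt_pow 2 ((α:ℂ) - 3*Complex.I*k 0)).comp (0:ℝ)
    ((hasDerivAt_const (0:ℝ) ((α:ℝ):ℂ)).sub (hk'.const_mul (3*Complex.I)))
  have hB := (hasDerivAt_pow 2 ((α:ℂ) - Complex.I*k 0)).comp (0:ℝ)
    ((hasDerivAt_const (0:ℝ) ((α:ℝ):ℂ)).sub (hk'.const_mul Complex.I))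
  have hC := (hasDerivAt_pow 2 ((α:ℂ) + Complex.I*k 0)).comp (0:ℝ)
    ((hasDerivAt_const (0:ℝ) ((α:ℝ):ℂ)).add (hk'.const_mul Complex.I))
  have hE1 := ((hk'.const_mul (2*Complex.I)).mul h1).cexp
  have hE2 := ((hk'.const_mul (2*Complex.I)).mul h2).cexp
  have hM := ((hk'.const_mul Complex.I).mul (h1.add h2)).cexp
  have hM2 := ((hk'.const_mul (2*Complex.I)).mul (h1.add h2)).cexp
  have hK2 := (hasDerivAt_pow 2 (k 0)).comp (0:ℝ) hk'
  have h8 := hK2.const_mul (8:ℂ)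
  have hG := ((hA.sub (hB.mul (hE1.add hE2))).add (h8.mul hM)).add (hC.mul hM2)
  have hZ : HasDerivAt (fun t =>
      ((α : ℂ) - 3 * Complex.I * k t) ^ 2
        - ((α : ℂ) - Complex.I * k t) ^ 2
          * (Complex.exp (2 * Complex.I * k t * (ℓ₁ t))
            + Complex.exp (2 * Complex.I * k t * (ℓ₂ t)))
        + 8 * (k t) ^ 2 * Complex.exp (Complex.I * k t * ((ℓ₁ t : ℂ) + (ℓ₂ t : ℂ)))
        + ((α : ℂ) + Complex.I * k t) ^ 2
          * Complex.exp (2 * Complex.I * k t * ((ℓ₁ t : ℂ) + (ℓ₂ t : ℂ)))) 0 0 :=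
    (hasDerivAt_const (0:ℝ) (0:ℂ)).congr_of_eventuallyEq hF
  have hD := hG.unique hZ
  have hx1 : Complex.exp (2 * Complex.I * ((n * Real.pi / ℓ : ℝ) : ℂ) * (ℓ:ℂ)) = 1 := by
    rw [show (2 * Complex.I * ((n * Real.pi / ℓ : ℝ) : ℂ) * (ℓ:ℂ))
        = ((n:ℤ):ℂ) * (2 * (Real.pi:ℂ) * Complex.I) by push_cast; field_simp,
      Complex.exp_int_mul_two_pi_mul_I]
  have hx2 : Complex.exp (Complex.I * ((n * Real.pi / ℓ : ℝ) : ℂ) * ((ℓ:ℂ) + (ℓ:ℂ))) = 1 := by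
    rw [show (Complex.I * ((n * Real.pi / ℓ : ℝ) : ℂ) * ((ℓ:ℂ) + (ℓ:ℂ)))
        = ((n:ℤ):ℂ) * (2 * (Real.pi:ℂ) * Complex.I) by push_cast; field_simp; ring,
      Complex.exp_int_mul_two_pi_mul_I]
  have hx3 : Complex.exp (2 * Complex.I * ((n * Real.pi / ℓ : ℝ) : ℂ) * ((ℓ:ℂ) + (ℓ:ℂ))) = 1 := by
    rw [show (2 * Complex.I * ((n * Real.pi / ℓ : ℝ) : ℂ) * ((ℓ:ℂ) + (ℓ:ℂ)))
        = (((2*n:ℤ)):ℂ) * (2 * (Real.pi:ℂ) * Complex.I) by push_cast; field_simp; ring,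
      Complex.exp_int_mul_two_pi_mul_I]
  simp only [Function.comp_apply, Pi.mul_apply, Pi.add_apply, Pi.sub_apply, hk0, hℓ₁0, hℓ₂0, hx1, hx2, hx3] at hD
  norm_num at hD
  have key : (8*Complex.I*((n:ℂ)*(Real.pi:ℂ)/(ℓ:ℂ))*(Complex.I*(α:ℂ) + (n:ℂ)*(Real.pi:ℂ)/(ℓ:ℂ)))
      * (2*(ℓ:ℂ)*deriv k 0 + ((n:ℂ)*(Real.pi:ℂ)/(ℓ:ℂ))*(((deriv ℓ₁ 0 : ℝ):ℂ) + ((deriv ℓ₂ 0 : ℝ):ℂ))) = 0 := by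
    linear_combination hD + (-(16:ℂ)*((n:ℂ)*(Real.pi:ℂ)/(ℓ:ℂ))*deriv k 0) * Complex.I_sq
  have hpos : (0:ℝ) < n * Real.pi / ℓ := div_pos (mul_pos (by exact_mod_cast hn) Real.pi_pos) hℓ
  have hXr : (n:ℂ)*(Real.pi:ℂ)/(ℓ:ℂ) = ((n * Real.pi / ℓ : ℝ):ℂ) := by push_cast; ring
  have nz3 : Complex.I*(α:ℂ) + (n:ℂ)*(Real.pi:ℂ)/(ℓ:ℂ) ≠ 0 := by
    rw [hXr]
    intro h
    have hre := congrArg Complex.re h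
    simp only [Complex.add_re, Complex.mul_re, Complex.I_re, Complex.I_im,
      Complex.ofReal_re, Complex.ofReal_im, Complex.zero_re] at hre
    linarith
  have nz : (8*Complex.I*((n:ℂ)*(Real.pi:ℂ)/(ℓ:ℂ))*(Complex.I*(α:ℂ) + (n:ℂ)*(Real.pi:ℂ)/(ℓ:ℂ))) ≠ 0 := by
    refine mul_ne_zero (mul_ne_zero (mul_ne_zero (by norm_num) Complex.I_ne_zero) ?_) nz3
    rw [hXr]
    exact Complex.ofReal_ne_zero.mpr (ne_of_gt hpos)
  have h5 : 2*(ℓ:ℂ)*deriv k 0 + ((n:ℂ)*(Real.pi:ℂ)/(ℓ:ℂ))*(((deriv ℓ₁ 0 : ℝ):ℂ) + ((deriv ℓ₂ 0 : ℝ):ℂ)) = 0 :=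
    (mul_eq_zero.mp key).resolve_left nz
  push_cast
  field_simp at h5 ⊢
  linear_combination h5
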